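/- Let n, r be positive integers and c, d integers. Set 𝒹₁ = gcd(c−d, n) and 𝒹₂ = gcd(c+(r−1)d, n), and let B be the r×r matrix with diagonal entries c and off-diagonal entries d. Then the number of vectors x ∈ (ℤ/nℤ)^r satisfying B·x = 0 in (ℤ/nℤ)^r equals 𝒹₁^{r−1} · gcd(𝒹₂, d·n/𝒹₁). -/

import Mathlib

-- Bezout reduction: kernel of mul by m = kernel of mul by gcd m n
lemma aux_gcd_iff {n : ℕ} [NeZero n] (m : ℤ) (s : ZMod n) :
    (m : ZMod n) * s = 0 ↔ ((Int.gcd m n : ℤ) : ZMod n) * s = 0 := by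
  constructor
  · intro h
    have hb : (Int.gcd m n : ℤ) = m * Int.gcdA m n + n * Int.gcdB m n := Int.gcd_eq_gcd_ab m n
    calc ((Int.gcd m n : ℤ) : ZMod n) * s
        = ((m * Int.gcdA m n + n * Int.gcdB m n : ℤ) : ZMod n) * s := by rw [← hb]
      _ = (Int.gcdA m n : ZMod n) * ((m : ZMod n) * s)
          + ((n : ℤ) : ZMod n) * ((Int.gcdB m n : ZMod n) * s) := by push_cast; ring
      _ = 0 := by
          rw [h]
          simp [ZMod.natCast_self]
  · intro h
    obtain ⟨k, hk⟩ : (Int.gcd m n : ℤ) ∣ m := Int.gcd_dvd_left _ _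
    calc (m : ZMod n) * s = ((Int.gcd m n : ℤ) * k : ℤ) * s := by rw [← hk]
      _ = (k : ZMod n) * (((Int.gcd m n : ℤ) : ZMod n) * s) := by push_cast; ring
      _ = 0 := by rw [h, mul_zero]

lemma aux_pair_iff {n : ℕ} [NeZero n] (e w : ℤ) (s : ZMod n) :
    ((e : ZMod n) * s = 0 ∧ (w : ZMod n) * s = 0)
      ↔ ((Int.gcd e w : ℤ) : ZMod n) * s = 0 := by
  constructor
  · rintro ⟨h1, h2⟩
    have hb : (Int.gcd e w : ℤ) = e * Int.gcdA e w + w * Int.gcdB e w := Int.gcd_eq_gcd_ab e w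
    calc ((Int.gcd e w : ℤ) : ZMod n) * s
        = ((e * Int.gcdA e w + w * Int.gcdB e w : ℤ) : ZMod n) * s := by rw [← hb]
      _ = (Int.gcdA e w : ZMod n) * ((e : ZMod n) * s)
          + (Int.gcdB e w : ZMod n) * ((w : ZMod n) * s) := by push_cast; ring
      _ = 0 := by rw [h1, h2]; simp
  · intro h
    constructor
    · obtain ⟨k, hk⟩ : (Int.gcd e w : ℤ) ∣ e := Int.gcd_dvd_left _ _
      calc (e : ZMod n) * s = ((Int.gcd e w : ℤ) * k : ℤ) * s := by rw [← hk]
        _ = (k : ZMod n) * (((Int.gcd e w : ℤ) : ZMod n) * s) := by push_cast; ring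
        _ = 0 := by rw [h, mul_zero]
    · obtain ⟨k, hk⟩ : (Int.gcd e w : ℤ) ∣ w := Int.gcd_dvd_right _ _
      calc (w : ZMod n) * s = ((Int.gcd e w : ℤ) * k : ℤ) * s := by rw [← hk]
        _ = (k : ZMod n) * (((Int.gcd e w : ℤ) : ZMod n) * s) := by push_cast; ring
        _ = 0 := by rw [h, mul_zero]

lemma aux_ker_nat {n : ℕ} [NeZero n] (g : ℕ) (hg : 0 < g) (hgn : g ∣ n) :
    Nat.card {s : ZMod n // (g : ZMod n) * s = 0} = g := by
  have hn : 0 < n := Nat.pos_of_ne_zero (NeZero.ne n)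
  have hq : 0 < n / g := Nat.div_pos (Nat.le_of_dvd hn hgn) hg
  have hqg : n / g * g = n := Nat.div_mul_cancel hgn
  have key : ∀ s : ZMod n, ((g : ZMod n) * s = 0 ↔ (n / g) ∣ s.val) := by
    intro s
    have h1 : (g : ZMod n) * s = ((g * s.val : ℕ) : ZMod n) := by
      push_cast [ZMod.natCast_val, ZMod.cast_id]
      ring
    rw [h1, ZMod.natCast_eq_zero_iff]
    constructor
    · intro h
      have : (n / g) * g ∣ g * s.val := by rwa [hqg]
      rw [mul_comm (n/g) g] at this
      exact (mul_dvd_mul_iff_left hg.ne').mp this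
    · rintro ⟨k, hk⟩
      refine ⟨k, ?_⟩
      rw [hk]
      calc g * (n / g * k) = n / g * g * k := by ring
        _ = n * k := by rw [hqg]
  rw [Nat.card_eq_fintype_card]
  classical
  rw [Fintype.card_of_subtype ((Finset.univ.filter (fun s : ZMod n => (g : ZMod n) * s = 0)))
    (by simp)]
  rw [Finset.card_eq_of_bijective (fun j hj => ((n / g * j : ℕ) : ZMod n))]
  · intro s hs
    rw [Finset.mem_filter] at hs
    obtain ⟨k, hk⟩ := (key s).mp hs.2
    refine ⟨k, ?_, ?_⟩
    · by_contra hlt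
      push_neg at hlt
      have : n ≤ s.val := by
        calc n = n / g * g := hqg.symm
          _ ≤ n / g * k := Nat.mul_le_mul_left _ hlt
          _ = s.val := hk.symm
      exact absurd (ZMod.val_lt s) (not_lt.mpr this)
    · rw [← hk, ZMod.natCast_val, ZMod.cast_id]
  · intro j hj
    rw [Finset.mem_filter]
    refine ⟨Finset.mem_univ _, (key _).mpr ?_⟩
    rw [ZMod.val_natCast_of_lt]
    · exact ⟨j, rfl⟩
    · calc n / g * j < n / g * g := (Nat.mul_lt_mul_left hq).mpr hj
        _ = n := hqg
  · intro i j hi hj hij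
    have hlt : ∀ k, k < g → n / g * k < n := by
      intro k hk
      calc n / g * k < n / g * g := (Nat.mul_lt_mul_left hq).mpr hk
        _ = n := hqg
    have := congrArg ZMod.val hij
    rw [ZMod.val_natCast_of_lt (hlt i hi), ZMod.val_natCast_of_lt (hlt j hj)] at this
    exact Nat.eq_of_mul_eq_mul_left hq this

lemma aux_ker_int {n : ℕ} [NeZero n] (m : ℤ) :
    Nat.card {s : ZMod n // (m : ZMod n) * s = 0} = Int.gcd m n := by
  have hdvd : Int.gcd m n ∣ n := Int.natCast_dvd_natCast.mp (Int.gcd_dvd_right _ _)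
  have hpos : 0 < Int.gcd m n := by
    rcases Nat.eq_zero_or_pos (Int.gcd m n) with h | h
    · exact absurd ((Int.gcd_eq_zero_iff.mp h).2) (by exact_mod_cast NeZero.ne n)
    · exact h
  have := aux_ker_nat (n := n) (Int.gcd m n) hpos hdvd
  rw [← this]
  apply Nat.card_congr
  apply Equiv.subtypeEquivRight
  intro s
  rw [aux_gcd_iff]
  norm_cast

lemma aux_solvable_iff {n : ℕ} [NeZero n] (a : ℤ) (t : ZMod n) :
    (∃ y : ZMod n, (a : ZMod n) * y = t)
      ↔ (((n : ℤ) / Int.gcd a n : ℤ) : ZMod n) * t = 0 := by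
  set g : ℤ := (Int.gcd a n : ℤ) with hgdef
  have hgn : g ∣ (n : ℤ) := Int.gcd_dvd_right _ _
  have hga : g ∣ a := Int.gcd_dvd_left _ _
  have hg0 : g ≠ 0 := by
    simp only [hgdef, ne_eq, Nat.cast_eq_zero]
    intro h
    exact absurd ((Int.gcd_eq_zero_iff.mp h).2) (by exact_mod_cast NeZero.ne n)
  constructor
  · rintro ⟨y, rfl⟩
    obtain ⟨a', ha'⟩ := hga
    have hcalc : ((n : ℤ) / g) * a = n * a' := by
      rw [ha', ← mul_assoc, Int.ediv_mul_cancel hgn]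
    calc (((n : ℤ) / g : ℤ) : ZMod n) * ((a : ZMod n) * y)
        = ((((n : ℤ) / g) * a : ℤ) : ZMod n) * y := by push_cast; ring
      _ = ((n * a' : ℤ) : ZMod n) * y := by rw [hcalc]
      _ = 0 := by push_cast; simp [ZMod.natCast_self]
  · intro h
    -- h : (n/g) * t = 0, so n ∣ (n/g) * t.val, so g ∣ t.val
    have h2 : (n : ℤ) ∣ ((n : ℤ) / g) * (t.val : ℤ) := by
      rw [← ZMod.intCast_zmod_eq_zero_iff_dvd]
      push_cast [ZMod.natCast_val, ZMod.cast_id]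
      exact h
    obtain ⟨k, hk⟩ := h2
    -- n = (n/g) * g
    have hng : (n : ℤ) = (n : ℤ) / g * g := (Int.ediv_mul_cancel hgn).symm
    have hq0 : (n : ℤ) / g ≠ 0 := by
      intro h0
      rw [h0, zero_mul] at hng
      exact absurd hng (by exact_mod_cast NeZero.ne n)
    have hgt : g ∣ (t.val : ℤ) := by
      refine ⟨k, ?_⟩
      have : (n : ℤ) / g * (t.val : ℤ) = (n : ℤ) / g * (g * k) := by
        rw [hk]
        conv_lhs => rw [hng]
        ring
      exact mul_left_cancel₀ hq0 this
    obtain ⟨u, hu⟩ := hgt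
    -- g = a * gcdA + n * gcdB
    have hb : g = a * Int.gcdA a n + n * Int.gcdB a n := Int.gcd_eq_gcd_ab a n
    refine ⟨((Int.gcdA a n * u : ℤ) : ZMod n), ?_⟩
    have : t = ((t.val : ℤ) : ZMod n) := by
      push_cast [ZMod.natCast_val, ZMod.cast_id]
      rfl
    rw [this, hu, hb]
    push_cast
    simp [ZMod.natCast_self]
    ring

lemma aux_sum_ker {n : ℕ} [NeZero n] (a : ℤ) (m : ℕ) (u : ZMod n)
    (hu : (a : ZMod n) * u = 0) :
    Nat.card {k : Fin (m+1) → ZMod n // (∀ i, (a : ZMod n) * k i = 0) ∧ ∑ i, k i = u}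
      = (Int.gcd a n) ^ m := by
  have e : {k : Fin (m+1) → ZMod n // (∀ i, (a : ZMod n) * k i = 0) ∧ ∑ i, k i = u}
      ≃ (Fin m → {z : ZMod n // (a : ZMod n) * z = 0}) :=
    { toFun := fun x i => ⟨x.1 i.castSucc, x.2.1 _⟩
      invFun := fun k =>
        ⟨Fin.snoc (fun i => (k i).1) (u - ∑ i, (k i).1), by
          intro i
          refine Fin.lastCases ?_ ?_ i
          · rw [Fin.snoc_last, mul_sub, hu, Finset.mul_sum,
              Finset.sum_congr rfl (fun i _ => (k i).2)]
            simp
          · intro j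
            rw [Fin.snoc_castSucc]
            exact (k j).2, by
          rw [Fin.sum_univ_castSucc]
          simp only [Fin.snoc_castSucc, Fin.snoc_last]
          ring⟩
      left_inv := by
        rintro ⟨x, hx1, hx2⟩
        ext i
        refine Fin.lastCases ?_ ?_ i
        · simp only [Fin.snoc_last]
          rw [← hx2, Fin.sum_univ_castSucc]
          ring
        · intro j
          simp [Fin.snoc_castSucc]
      right_inv := by
        intro k
        ext i
        simp [Fin.snoc_castSucc] }
  rw [Nat.card_congr e, Nat.card_pi, Finset.prod_const, Finset.card_univ,
    Fintype.card_fin, aux_ker_int]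

lemma aux_fiber {n : ℕ} [NeZero n] (m : ℕ) (a d E : ℤ) (hE : E = a + (m+1) * d)
    (s : ZMod n) :
    Nat.card {x : Fin (m+1) → ZMod n //
        (∀ i, (a : ZMod n) * x i = -((d : ZMod n) * s)) ∧ ∑ i, x i = s}
      = if ((E : ZMod n) * s = 0 ∧ ∃ y : ZMod n, (a : ZMod n) * y = -((d : ZMod n) * s))
        then (Int.gcd a n) ^ m else 0 := by
  have hcast : (E : ZMod n) = (a : ZMod n) + ((m+1 : ℕ) : ZMod n) * (d : ZMod n) := by
    rw [hE]; push_cast; ring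
  by_cases h : ((E : ZMod n) * s = 0 ∧ ∃ y : ZMod n, (a : ZMod n) * y = -((d : ZMod n) * s))
  · rw [if_pos h]
    obtain ⟨hEs, y, hy⟩ := h
    set u : ZMod n := s - ((m+1 : ℕ) : ZMod n) * y with hudef
    have hu : (a : ZMod n) * u = 0 := by
      have : (a : ZMod n) * u
          = (E : ZMod n) * s - ((m+1 : ℕ) : ZMod n) * ((a : ZMod n) * y + (d : ZMod n) * s) := by
        rw [hcast, hudef]; ring
      rw [this, hy, hEs]
      simp
    rw [← aux_sum_ker a m u hu]
    apply Nat.card_congr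
    refine Equiv.subtypeEquiv (Equiv.subRight (Function.const (Fin (m+1)) y)) ?_
    intro x
    simp only [Equiv.subRight_apply, Pi.sub_apply, Function.const_apply]
    constructor
    · rintro ⟨h1, h2⟩
      constructor
      · intro i
        rw [mul_sub, h1 i, hy]
        ring
      · rw [Finset.sum_sub_distrib, h2, Finset.sum_const, Finset.card_univ, Fintype.card_fin,
          hudef, nsmul_eq_mul]
    · rintro ⟨h1, h2⟩
      constructor
      · intro i
        have := h1 i
        rw [mul_sub, hy, sub_eq_zero] at this
        rw [this]
      · rw [Finset.sum_sub_distrib, Finset.sum_const, Finset.card_univ, Fintype.card_fin,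
          hudef, nsmul_eq_mul] at h2
        have : (∑ i, x i) - ((m+1 : ℕ) : ZMod n) * y = s - ((m+1 : ℕ) : ZMod n) * y := by
          rw [h2]
        exact sub_left_injective this
  · rw [if_neg h]
    rw [Nat.card_eq_zero]
    left
    rw [isEmpty_subtype]
    rintro x ⟨h1, h2⟩
    apply h
    refine ⟨?_, ⟨x 0, h1 0⟩⟩
    have : (a : ZMod n) * (∑ i, x i) = ∑ i, (a : ZMod n) * x i := by rw [Finset.mul_sum]
    rw [h2] at this
    rw [Finset.sum_congr rfl (fun i _ => h1 i), Finset.sum_const, Finset.card_univ,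
      Fintype.card_fin, nsmul_eq_mul] at this
    rw [hcast]
    rw [add_mul, this]
    ring

theorem stmt_6 (n r : ℕ) (hn : 0 < n) (hr : 0 < r) (c d : ℤ)
    (B : Matrix (Fin r) (Fin r) (ZMod n))
    (hB : ∀ i j, B i j = if i = j then (c : ZMod n) else (d : ZMod n)) :
    Nat.card {x : Fin r → ZMod n // B.mulVec x = 0}
      = (Int.gcd (c - d) n) ^ (r - 1) *
        Int.gcd ((Int.gcd (c + (r - 1) * d) n : ℤ)) (d * n / (Int.gcd (c - d) n : ℤ)) := by
  haveI : NeZero n := ⟨hn.ne'⟩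
  obtain ⟨m, rfl⟩ : ∃ m, r = m + 1 := ⟨r - 1, (Nat.succ_pred_eq_of_pos hr).symm⟩
  set a : ℤ := c - d with ha
  set E : ℤ := c + ((m + 1 : ℕ) : ℤ) * d - d with hEdef
  have hE : E = a + (m + 1) * d := by rw [hEdef, ha]; push_cast; ring
  have hEstmt : c + (((m+1 : ℕ) : ℤ) - 1) * d = E := by rw [hEdef]; ring
  -- characterize the equation
  have hP : ∀ x : Fin (m+1) → ZMod n, B.mulVec x = 0 ↔
      (∀ i, (a : ZMod n) * x i = -((d : ZMod n) * ∑ j, x j)) := by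
    intro x
    have hmv : ∀ i, B.mulVec x i = (a : ZMod n) * x i + (d : ZMod n) * ∑ j, x j := by
      intro i
      have : B.mulVec x i = ∑ j, B i j * x j := rfl
      rw [this]
      have : ∀ j, B i j * x j
          = (a : ZMod n) * (if i = j then x j else 0) + (d : ZMod n) * x j := by
        intro j
        rw [hB]
        rcases eq_or_ne i j with h | h
        · simp only [h, if_pos rfl, ha]
          push_cast
          ring
        · simp [h]
      rw [Finset.sum_congr rfl (fun j _ => this j), Finset.sum_add_distrib,
        ← Finset.mul_sum, ← Finset.mul_sum, Finset.sum_ite_eq]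
      simp
    constructor
    · intro h i
      have := congrFun h i
      rw [hmv i] at this
      simp only [Pi.zero_apply] at this
      linear_combination this
    · intro h
      funext i
      rw [hmv i, h i]
      simp
  -- sigma decomposition
  have E1 : {x : Fin (m+1) → ZMod n // B.mulVec x = 0}
      ≃ (s : ZMod n) × {x : Fin (m+1) → ZMod n //
          (∀ i, (a : ZMod n) * x i = -((d : ZMod n) * s)) ∧ ∑ i, x i = s} :=
    { toFun := fun x => ⟨∑ i, x.1 i, ⟨x.1, (hP x.1).mp x.2, rfl⟩⟩
      invFun := fun p => ⟨p.2.1, (hP p.2.1).mpr (by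
        intro i
        rw [p.2.2.2]
        exact p.2.2.1 i)⟩
      left_inv := fun x => rfl
      right_inv := by
        rintro ⟨s, x, hx1, hx2⟩
        subst hx2
        rfl }
  classical
  rw [Nat.card_congr E1, Nat.card_eq_fintype_card, Fintype.card_sigma]
  have hsummand : ∀ s : ZMod n,
      Fintype.card {x : Fin (m+1) → ZMod n //
          (∀ i, (a : ZMod n) * x i = -((d : ZMod n) * s)) ∧ ∑ i, x i = s}
      = if ((E : ZMod n) * s = 0 ∧ ∃ y : ZMod n, (a : ZMod n) * y = -((d : ZMod n) * s))
        then (Int.gcd a n) ^ m else 0 := by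
    intro s
    rw [← Nat.card_eq_fintype_card]
    exact aux_fiber m a d E hE s
  rw [Finset.sum_congr rfl (fun s _ => hsummand s), ← Finset.sum_filter,
    Finset.sum_const, smul_eq_mul, ← Fintype.card_subtype, ← Nat.card_eq_fintype_card]
  -- rewrite the condition
  set w : ℤ := d * (n : ℤ) / (Int.gcd a n : ℤ) with hw
  have hga : (Int.gcd a n : ℤ) ∣ (n : ℤ) := Int.gcd_dvd_right _ _
  have hwq : w = ((n : ℤ) / (Int.gcd a n : ℤ)) * d := by
    rw [hw, Int.mul_ediv_assoc d hga, mul_comm]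
  have hcond : ∀ s : ZMod n,
      (((E : ZMod n) * s = 0 ∧ ∃ y : ZMod n, (a : ZMod n) * y = -((d : ZMod n) * s)))
        ↔ ((Int.gcd E w : ℤ) : ZMod n) * s = 0 := by
    intro s
    rw [← aux_pair_iff]
    have : (∃ y : ZMod n, (a : ZMod n) * y = -((d : ZMod n) * s))
        ↔ (w : ZMod n) * s = 0 := by
      rw [aux_solvable_iff]
      rw [hwq]
      push_cast
      constructor
      · intro h
        linear_combination -h
      · intro h
        linear_combination -h
    rw [this]
  have hcount : Nat.card {s : ZMod n //
      ((E : ZMod n) * s = 0 ∧ ∃ y : ZMod n, (a : ZMod n) * y = -((d : ZMod n) * s))}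
      = Int.gcd ((Int.gcd E w : ℤ)) n := by
    rw [Nat.card_congr (Equiv.subtypeEquivRight hcond), aux_ker_int]
  rw [hcount, hEstmt]
  have harith : Int.gcd ((Int.gcd E w : ℤ)) ((n : ℕ) : ℤ) = Int.gcd ((Int.gcd E ((n:ℕ):ℤ) : ℤ)) w := by
    show Nat.gcd _ _ = Nat.gcd _ _
    simp only [Int.gcd, Int.natAbs_natCast]
    rw [Nat.gcd_assoc, Nat.gcd_comm w.natAbs, ← Nat.gcd_assoc]
  rw [harith, Nat.add_sub_cancel, mul_comm]
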